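/- Let u be a real-valued random variable with Lebesgue density f and cumulative distribution function F satisfying F(0) = τ for τ ∈ (0,1). Then for every h ∈ ℝ, E[ρ_τ(u − h) − ρ_τ(u)] = ∫_0^h (F(s) − τ) ds ≥ 0, where the integral is the signed (oriented) integral; moreover, for h ≥ 0 this equals ∫_0^h (h − λ) f(λ) dλ, and for h ≤ 0 it equals ∫_h^0 (λ − h) f(λ) dλ. (Note that ρ_τ(u − h) − ρ_τ(u) is bounded by |h|, so the expectation is well defined without moment assumptions.) -/

import Mathlib

open MeasureTheory Set

noncomputable section

/-- Quantile loss function `ρ_τ(u) = u (τ − I(u<0))`. -/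
def qloss (τ u : ℝ) : ℝ := u * (τ - if u < 0 then 1 else 0)

lemma qloss_lip {τ : ℝ} (h0 : 0 ≤ τ) (h1 : τ ≤ 1) (x y : ℝ) :
    |qloss τ x - qloss τ y| ≤ |x - y| := by
  unfold qloss
  split_ifs with hx hy hy <;> rw [abs_le] <;> constructor <;>
    rcases abs_cases (x - y) with h | h <;>
    nlinarith [h.1, h.2]

lemma measurable_qloss (τ : ℝ) : Measurable (qloss τ) := by
  unfold qloss
  exact measurable_id.mul (measurable_const.sub
    (Measurable.ite measurableSet_Iio measurable_const measurable_const))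

lemma hasDerivAt_qloss {τ x h₀ : ℝ} (hne : x ≠ h₀) :
    HasDerivAt (fun h => qloss τ (x - h)) ((if x < h₀ then 1 else 0) - τ) h₀ := by
  rcases hne.lt_or_gt with hlt | hlt
  · rw [if_pos hlt]
    have base : HasDerivAt (fun h : ℝ => (x - h) * (τ - 1)) (1 - τ) h₀ := by
      have := ((hasDerivAt_id h₀).const_sub x).mul_const (τ - 1)
      rw [show (1:ℝ) - τ = -1 * (τ - 1) by ring]; exact this
    apply base.congr_of_eventuallyEq
    filter_upwards [Ioi_mem_nhds hlt] with h hh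
    unfold qloss
    rw [if_pos (by simpa using sub_neg.mpr (mem_Ioi.mp hh))]
  · rw [if_neg (not_lt.mpr hlt.le)]
    have base : HasDerivAt (fun h : ℝ => (x - h) * τ) (0 - τ) h₀ := by
      have := ((hasDerivAt_id h₀).const_sub x).mul_const τ
      rw [show (0:ℝ) - τ = -1 * τ by ring]; exact this
    apply base.congr_of_eventuallyEq
    filter_upwards [Iio_mem_nhds hlt] with h hh
    unfold qloss
    rw [if_neg (by simp [not_lt, sub_nonneg, (mem_Iio.mp hh).le])]
    ring

lemma hasDerivAt_maxsub {lam h₀ : ℝ} (hne : lam ≠ h₀) :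
    HasDerivAt (fun h => max (h - lam) 0) (if lam < h₀ then 1 else 0) h₀ := by
  rcases hne.lt_or_gt with hlt | hlt
  · rw [if_pos hlt]
    apply ((hasDerivAt_id h₀).sub_const lam).congr_of_eventuallyEq
    filter_upwards [Ioi_mem_nhds hlt] with h hh
    rw [max_eq_left (by simp [sub_nonneg, (mem_Ioi.mp hh).le])]
    rfl
  · rw [if_neg (not_lt.mpr hlt.le)]
    apply (hasDerivAt_const h₀ (0:ℝ)).congr_of_eventuallyEq
    filter_upwards [Iio_mem_nhds hlt] with h hh
    rw [max_eq_right (by simp [sub_nonpos, (mem_Iio.mp hh).le])]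

lemma hasDerivAt_maxsub' {lam h₀ : ℝ} (hne : lam ≠ h₀) :
    HasDerivAt (fun h => max (lam - h) 0) (if h₀ < lam then -1 else 0) h₀ := by
  rcases hne.lt_or_gt with hlt | hlt
  · rw [if_neg (not_lt.mpr hlt.le)]
    apply (hasDerivAt_const h₀ (0:ℝ)).congr_of_eventuallyEq
    filter_upwards [Ioi_mem_nhds hlt] with h hh
    rw [max_eq_right (by simp [sub_nonpos, (mem_Ioi.mp hh).le])]
  · rw [if_pos hlt]
    have base := (hasDerivAt_id h₀).const_sub lam
    apply HasDerivAt.congr_of_eventuallyEq (by simpa using base)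
    filter_upwards [Iio_mem_nhds hlt] with h hh
    rw [max_eq_left (by simp [sub_nonneg, (mem_Iio.mp hh).le])]

/-- if `u` has Lebesgue density `f` with CDF `F` satisfying `F(0) = τ`,
then `E[ρ_τ(u − h) − ρ_τ(u)] = ∫_0^h (F(s) − τ) ds ≥ 0`; for `h ≥ 0` this equals
`∫_0^h (h − λ) f(λ) dλ` and for `h ≤ 0` it equals `∫_h^0 (λ − h) f(λ) dλ`. -/
theorem expected_qloss_difference
    {Ω : Type*} [MeasurableSpace Ω] (P : Measure Ω) [IsProbabilityMeasure P]
    (τ : ℝ) (hτ : τ ∈ Set.Ioo (0:ℝ) 1)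
    (u : Ω → ℝ) (hu_meas : Measurable u)
    (f : ℝ → ℝ) (hf_meas : Measurable f) (hf_nonneg : ∀ t, 0 ≤ f t)
    (hdensity : P.map u = volume.withDensity fun t => ENNReal.ofReal (f t))
    (F : ℝ → ℝ) (hF : ∀ s, F s = ∫ t in Set.Iic s, f t)
    (hquantile : F 0 = τ) :
    ∀ h : ℝ,
      (∫ ω, (qloss τ (u ω - h) - qloss τ (u ω)) ∂P) = (∫ s in (0:ℝ)..h, (F s - τ)) ∧
      0 ≤ ∫ ω, (qloss τ (u ω - h) - qloss τ (u ω)) ∂P ∧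
      (0 ≤ h → (∫ ω, (qloss τ (u ω - h) - qloss τ (u ω)) ∂P) =
        ∫ lam in (0:ℝ)..h, (h - lam) * f lam) ∧
      (h ≤ 0 → (∫ ω, (qloss τ (u ω - h) - qloss τ (u ω)) ∂P) =
        ∫ lam in h..(0:ℝ), (lam - h) * f lam) := by
  obtain ⟨hτ0, hτ1⟩ := hτ
  -- integrability of f
  have hmapP : IsProbabilityMeasure (P.map u) := Measure.isProbabilityMeasure_map hu_meas.aemeasurable
  have hlint : ∫⁻ t, ENNReal.ofReal (f t) = 1 := by
    have h1 := measure_univ (μ := P.map u)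
    rw [hdensity, withDensity_apply _ MeasurableSet.univ] at h1
    simpa using h1
  have hf_int : Integrable f := by
    refine ⟨hf_meas.aestronglyMeasurable, ?_⟩
    rw [hasFiniteIntegral_iff_ofReal (Filter.Eventually.of_forall hf_nonneg), hlint]
    exact ENNReal.one_lt_top
  -- the CDF via the measure
  have key_meas : ∀ s, (P {ω | u ω < s}).toReal = F s := by
    intro s
    have h1 : P {ω | u ω < s} = ∫⁻ t in Iio s, ENNReal.ofReal (f t) := by
      have : {ω | u ω < s} = u ⁻¹' (Iio s) := rfl
      rw [this, ← Measure.map_apply hu_meas measurableSet_Iio, hdensity,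
        withDensity_apply _ measurableSet_Iio]
    have h2 : volume.restrict (Iio s) = volume.restrict (Iic s) :=
      Measure.restrict_congr_set Iio_ae_eq_Iic
    have h3 : F s = (∫⁻ t in Iic s, ENNReal.ofReal (f t)).toReal := by
      rw [hF s, integral_eq_lintegral_of_nonneg_ae (Filter.Eventually.of_forall hf_nonneg)
        hf_meas.aestronglyMeasurable.restrict]
    rw [h1, h2, ← h3]
  -- monotonicity of F
  have hF_mono : Monotone F := by
    intro s s' hss'
    rw [hF, hF]
    exact setIntegral_mono_set hf_int.integrableOn (Filter.Eventually.of_forall hf_nonneg)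
      (HasSubset.Subset.eventuallyLE (Iic_subset_Iic.mpr hss'))
  -- continuity of F
  have hF_eq : ∀ s, F s = F 0 + ∫ t in (0:ℝ)..s, f t := by
    intro s
    have := intervalIntegral.integral_Iic_sub_Iic (f := f) (μ := volume) (a := (0:ℝ)) (b := s)
      hf_int.integrableOn hf_int.integrableOn
    rw [hF, hF]; linarith
  have hF_cont : Continuous F := by
    have hc : Continuous fun s => F 0 + ∫ t in (0:ℝ)..s, f t :=
      continuous_const.add (intervalIntegral.continuous_primitive
        (fun a b => hf_int.intervalIntegrable) 0)
    have : F = fun s => F 0 + ∫ t in (0:ℝ)..s, f t := funext hF_eq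
    rw [this]; exact hc
  -- measurability and integrability of the qloss difference
  have hmeasQ : ∀ h : ℝ, AEStronglyMeasurable (fun ω => qloss τ (u ω - h) - qloss τ (u ω)) P :=
    fun h => (((measurable_qloss τ).comp (hu_meas.sub measurable_const)).sub
      ((measurable_qloss τ).comp hu_meas)).aestronglyMeasurable
  have hbndQ : ∀ (h : ℝ) (ω : Ω), |qloss τ (u ω - h) - qloss τ (u ω)| ≤ |h| := by
    intro h ω
    have := qloss_lip hτ0.le hτ1.le (u ω - h) (u ω)
    have h2 : u ω - h - u ω = -h := by ring
    rwa [h2, abs_neg] at this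
  have hintQ : ∀ h : ℝ, Integrable (fun ω => qloss τ (u ω - h) - qloss τ (u ω)) P := by
    intro h
    refine Integrable.mono' (integrable_const |h|) (hmeasQ h)
      (Filter.Eventually.of_forall fun ω => ?_)
    simpa [Real.norm_eq_abs] using hbndQ h ω
  set G : ℝ → ℝ := fun h => ∫ ω, (qloss τ (u ω - h) - qloss τ (u ω)) ∂P with hGdef
  -- null singletons
  have hnull : ∀ c : ℝ, P {ω | u ω = c} = 0 := by
    intro c
    have h1 : {ω | u ω = c} = u ⁻¹' ({c} : Set ℝ) := rfl
    rw [h1, ← Measure.map_apply hu_meas (measurableSet_singleton c), hdensity,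
      withDensity_apply _ (measurableSet_singleton c),
      Measure.restrict_eq_zero.mpr (by simp)]
    simp
  -- derivative of G
  have hG_deriv : ∀ h₀ : ℝ, HasDerivAt G (F h₀ - τ) h₀ := by
    intro h₀
    have hae : ∀ᵐ ω ∂P, u ω ≠ h₀ := by
      rw [ae_iff]
      convert hnull h₀ using 2
      ext ω; simp
    have hlip : ∀ᵐ ω ∂P, LipschitzOnWith (Real.nnabs 1)
        (fun h => qloss τ (u ω - h) - qloss τ (u ω)) (Metric.ball h₀ 1) := by
      refine Filter.Eventually.of_forall fun ω => ?_
      apply LipschitzOnWith.of_dist_le_mul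
      intro a _ b _
      rw [Real.dist_eq, Real.dist_eq]
      have h2 : qloss τ (u ω - a) - qloss τ (u ω) - (qloss τ (u ω - b) - qloss τ (u ω))
          = qloss τ (u ω - a) - qloss τ (u ω - b) := by ring
      rw [h2]
      have := qloss_lip hτ0.le hτ1.le (u ω - a) (u ω - b)
      have h3 : u ω - a - (u ω - b) = b - a := by ring
      rw [h3] at this
      calc |qloss τ (u ω - a) - qloss τ (u ω - b)| ≤ |b - a| := this
        _ = ↑(Real.nnabs 1) * |a - b| := by
            rw [abs_sub_comm]; simp
    have hdiff : ∀ᵐ ω ∂P, HasDerivAt (fun h => qloss τ (u ω - h) - qloss τ (u ω))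
        ((if u ω < h₀ then (1:ℝ) else 0) - τ) h₀ := by
      filter_upwards [hae] with ω hω
      exact (hasDerivAt_qloss hω).sub_const (qloss τ (u ω))
    have hFpmeas : AEStronglyMeasurable (fun ω => (if u ω < h₀ then (1:ℝ) else 0) - τ) P := by
      refine Measurable.aestronglyMeasurable ?_
      exact (Measurable.ite (hu_meas measurableSet_Iio) measurable_const
        measurable_const).sub measurable_const
    have main := hasDerivAt_integral_of_dominated_loc_of_lip
      (F := fun h ω => qloss τ (u ω - h) - qloss τ (u ω))
      (F' := fun ω => (if u ω < h₀ then (1:ℝ) else 0) - τ)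
      (bound := fun _ => (1:ℝ)) (Metric.ball_mem_nhds h₀ one_pos)
      (Filter.Eventually.of_forall fun h => hmeasQ h) (hintQ h₀) hFpmeas hlip
      (integrable_const 1) hdiff
    have hval : ∫ ω, ((if u ω < h₀ then (1:ℝ) else 0) - τ) ∂P = F h₀ - τ := by
      have hs : MeasurableSet {ω | u ω < h₀} := hu_meas measurableSet_Iio
      have hind : (fun ω => if u ω < h₀ then (1:ℝ) else 0)
          = Set.indicator {ω | u ω < h₀} 1 := by
        ext ω; by_cases hω : u ω < h₀ <;> simp [Set.indicator_apply, hω]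
      rw [integral_sub _ (integrable_const τ)]
      · rw [hind, integral_indicator_one hs, measureReal_def, key_meas h₀]
        simp
      · rw [hind]
        exact (integrable_const (1:ℝ)).indicator hs
    rw [hval] at main
    exact main.2
  -- derivative of the primitive H
  set Hf : ℝ → ℝ := fun h => ∫ s in (0:ℝ)..h, (F s - τ) with hHdef
  have hH_deriv : ∀ h₀ : ℝ, HasDerivAt Hf (F h₀ - τ) h₀ := by
    intro h₀
    exact intervalIntegral.integral_hasDerivAt_right
      ((hF_cont.sub continuous_const).intervalIntegrable 0 h₀)
      ((hF_cont.sub continuous_const).stronglyMeasurableAtFilter _ _)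
      (hF_cont.sub continuous_const).continuousAt
  have hG0 : G 0 = 0 := by
    have : (fun ω => qloss τ (u ω - 0) - qloss τ (u ω)) = fun _ => (0:ℝ) := by
      ext ω; simp
    rw [hGdef]; simp only [this]; exact integral_zero _ _
  -- Part 1: G = Hf
  have part1 : ∀ h : ℝ, G h = Hf h := by
    intro h
    have hdG : Differentiable ℝ (fun x => G x - Hf x) := fun x =>
      ((hG_deriv x).sub (hH_deriv x)).differentiableAt
    have hzero : ∀ x, deriv (fun x => G x - Hf x) x = 0 := fun x => by
      have := ((hG_deriv x).sub (hH_deriv x)).deriv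
      rw [sub_self] at this; exact this
    have hconst := is_const_of_deriv_eq_zero hdG hzero h 0
    have hH0 : Hf 0 = 0 := intervalIntegral.integral_same
    rw [hG0, hH0] at hconst
    linarith [hconst]
  -- Part 2
  have part2 : ∀ h : ℝ, 0 ≤ Hf h := by
    intro h
    rcases le_total 0 h with hh | hh
    · apply intervalIntegral.integral_nonneg hh
      intro s hs
      have := hF_mono hs.1
      rw [hquantile] at this
      linarith
    · rw [hHdef]
      simp only
      rw [intervalIntegral.integral_symm, ← intervalIntegral.integral_neg]
      apply intervalIntegral.integral_nonneg hh
      intro s hs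
      have := hF_mono hs.2
      rw [hquantile] at this
      simp only [neg_sub]
      linarith
  -- Part 3 helper: the K function
  have hbnd3 : ∀ (h' : ℝ) (lam : ℝ), 0 < lam → max (h' - lam) 0 ≤ |h'| := by
    intro h' lam hlam
    apply max_le _ (abs_nonneg h')
    calc h' - lam ≤ h' := by linarith
      _ ≤ |h'| := le_abs_self h'
  have hKmeas : ∀ h' : ℝ, AEStronglyMeasurable (fun lam => max (h' - lam) 0 * f lam)
      (volume.restrict (Ioi (0:ℝ))) :=
    fun h' => (((measurable_const.sub measurable_id).max measurable_const).mul
      hf_meas).aestronglyMeasurable.restrict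
  have hKint : ∀ h' : ℝ, Integrable (fun lam => max (h' - lam) 0 * f lam)
      (volume.restrict (Ioi (0:ℝ))) := by
    intro h'
    refine Integrable.mono' ((hf_int.const_mul |h'|).restrict) (hKmeas h') ?_
    rw [ae_restrict_iff' measurableSet_Ioi]
    refine Filter.Eventually.of_forall fun lam hlam => ?_
    rw [Real.norm_eq_abs, abs_mul, abs_of_nonneg (le_max_right _ _),
      abs_of_nonneg (hf_nonneg lam)]
    exact mul_le_mul_of_nonneg_right (hbnd3 h' lam hlam) (hf_nonneg lam)
  have hK_deriv : ∀ h₀ : ℝ, HasDerivAt (fun h => ∫ lam in Ioi (0:ℝ), max (h - lam) 0 * f lam)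
      (∫ lam in Ioi (0:ℝ), (if lam < h₀ then (1:ℝ) else 0) * f lam) h₀ := by
    intro h₀
    have hae : ∀ᵐ lam ∂(volume.restrict (Ioi (0:ℝ))), lam ≠ h₀ := by
      refine ae_restrict_of_ae ?_
      rw [ae_iff]
      convert Real.volume_singleton (a := h₀) using 2
      ext lam; simp
    have hlip : ∀ᵐ lam ∂(volume.restrict (Ioi (0:ℝ))), LipschitzOnWith (Real.nnabs (f lam))
        (fun h => max (h - lam) 0 * f lam) (Metric.ball h₀ 1) := by
      refine Filter.Eventually.of_forall fun lam => ?_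
      apply LipschitzOnWith.of_dist_le_mul
      intro a _ b _
      rw [Real.dist_eq, Real.dist_eq, ← sub_mul, abs_mul]
      have h1 : |max (a - lam) 0 - max (b - lam) 0| ≤ |a - b| := by
        calc |max (a - lam) 0 - max (b - lam) 0| ≤ |a - lam - (b - lam)| :=
              abs_max_sub_max_le_abs _ _ _
          _ = |a - b| := by ring_nf
      calc |max (a - lam) 0 - max (b - lam) 0| * |f lam| ≤ |a - b| * |f lam| :=
            mul_le_mul_of_nonneg_right h1 (abs_nonneg _)
        _ = ↑(Real.nnabs (f lam)) * |a - b| := by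
            rw [mul_comm]; simp [Real.coe_nnabs]
    have hdiff : ∀ᵐ lam ∂(volume.restrict (Ioi (0:ℝ))),
        HasDerivAt (fun h => max (h - lam) 0 * f lam)
          ((if lam < h₀ then (1:ℝ) else 0) * f lam) h₀ := by
      filter_upwards [hae] with lam hlam
      exact (hasDerivAt_maxsub hlam).mul_const (f lam)
    have hFpmeas : AEStronglyMeasurable (fun lam => (if lam < h₀ then (1:ℝ) else 0) * f lam)
        (volume.restrict (Ioi (0:ℝ))) :=
      ((Measurable.ite measurableSet_Iio measurable_const measurable_const).mul
        hf_meas).aestronglyMeasurable.restrict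
    have main := hasDerivAt_integral_of_dominated_loc_of_lip
      (F := fun h lam => max (h - lam) 0 * f lam)
      (F' := fun lam => (if lam < h₀ then (1:ℝ) else 0) * f lam)
      (bound := f) (Metric.ball_mem_nhds h₀ one_pos)
      (Filter.Eventually.of_forall fun h => hKmeas h) (hKint h₀) hFpmeas hlip
      hf_int.restrict hdiff
    exact main.2
  have hK_deriv_val : ∀ h₀ : ℝ, 0 ≤ h₀ →
      ∫ lam in Ioi (0:ℝ), (if lam < h₀ then (1:ℝ) else 0) * f lam = F h₀ - τ := by
    intro h₀ hh₀
    have hind : (fun lam => (if lam < h₀ then (1:ℝ) else 0) * f lam)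
        = Set.indicator (Iio h₀) f := by
      ext lam; by_cases hl : lam < h₀ <;> simp [Set.indicator_apply, hl, mem_Iio]
    rw [hind, setIntegral_indicator measurableSet_Iio, Ioi_inter_Iio,
      Measure.restrict_congr_set Ioo_ae_eq_Ioc]
    have h4 := intervalIntegral.integral_Iic_sub_Iic (f := f) (μ := volume) (a := (0:ℝ)) (b := h₀)
      hf_int.integrableOn hf_int.integrableOn
    rw [intervalIntegral.integral_of_le hh₀] at h4
    rw [← hF, ← hF] at h4
    rw [← hquantile]
    linarith [h4]
  -- Part 3
  have part3 : ∀ h : ℝ, 0 ≤ h →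
      G h = ∫ lam in (0:ℝ)..h, (h - lam) * f lam := by
    intro h hh
    set K : ℝ → ℝ := fun h' => ∫ lam in Ioi (0:ℝ), max (h' - lam) 0 * f lam with hKdef
    have hK0 : K 0 = 0 := by
      rw [hKdef]
      simp only
      rw [setIntegral_congr_fun measurableSet_Ioi
        (g := fun _ => (0:ℝ)) fun lam hlam => by
          rw [max_eq_right (by linarith [mem_Ioi.mp hlam] : (0:ℝ) - lam ≤ 0), zero_mul]]
      simp
    have hDzero : ∀ x ∈ Ico (0:ℝ) h, HasDerivWithinAt (fun y => G y - K y) 0 (Ici x) x := by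
      intro x hx
      have hd := (hG_deriv x).sub (hK_deriv x)
      rw [hK_deriv_val x hx.1] at hd
      rw [sub_self] at hd; exact hd.hasDerivWithinAt
    have hDcont : ContinuousOn (fun y => G y - K y) (Icc 0 h) := fun x _ =>
      (((hG_deriv x).sub (hK_deriv x)).differentiableAt.continuousAt).continuousWithinAt
    have hconst := constant_of_has_deriv_right_zero hDcont hDzero h (right_mem_Icc.mpr hh)
    simp only [hG0, hK0, sub_zero] at hconst
    have hGK : G h = K h := by linarith [hconst]
    rw [hGK, intervalIntegral.integral_of_le hh, hKdef]
    simp only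
    rw [← Ioc_union_Ioi_eq_Ioi hh,
      setIntegral_union (Ioc_disjoint_Ioi le_rfl) measurableSet_Ioi
        (IntegrableOn.mono_set (hKint h) Ioc_subset_Ioi_self)
        (IntegrableOn.mono_set (hKint h) (Ioi_subset_Ioi hh))]
    rw [setIntegral_congr_fun measurableSet_Ioi
      (g := fun _ => (0:ℝ)) (fun lam hlam => by
        rw [max_eq_right (by linarith [mem_Ioi.mp hlam] : h - lam ≤ 0), zero_mul])]
    rw [setIntegral_congr_fun measurableSet_Ioc
      (g := fun lam => (h - lam) * f lam) (fun lam hlam => by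
        rw [max_eq_left (by linarith [hlam.2] : (0:ℝ) ≤ h - lam)])]
    simp
  -- Part 4 (mirror)
  have part4 : ∀ h : ℝ, h ≤ 0 →
      G h = ∫ lam in h..(0:ℝ), (lam - h) * f lam := by
    intro h hh
    have hbnd4 : ∀ (h' lam : ℝ), lam ≤ 0 → max (lam - h') 0 ≤ |h'| := by
      intro h' lam hlam
      apply max_le _ (abs_nonneg h')
      calc lam - h' ≤ -h' := by linarith
        _ ≤ |h'| := neg_le_abs h'
    have hLmeas : ∀ h' : ℝ, AEStronglyMeasurable (fun lam => max (lam - h') 0 * f lam)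
        (volume.restrict (Iic (0:ℝ))) :=
      fun h' => (((measurable_id.sub measurable_const).max measurable_const).mul
        hf_meas).aestronglyMeasurable.restrict
    have hLint : ∀ h' : ℝ, Integrable (fun lam => max (lam - h') 0 * f lam)
        (volume.restrict (Iic (0:ℝ))) := by
      intro h'
      refine Integrable.mono' ((hf_int.const_mul |h'|).restrict) (hLmeas h') ?_
      rw [ae_restrict_iff' measurableSet_Iic]
      refine Filter.Eventually.of_forall fun lam hlam => ?_
      rw [Real.norm_eq_abs, abs_mul, abs_of_nonneg (le_max_right _ _),
        abs_of_nonneg (hf_nonneg lam)]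
      exact mul_le_mul_of_nonneg_right (hbnd4 h' lam hlam) (hf_nonneg lam)
    have hL_deriv : ∀ h₀ : ℝ, HasDerivAt (fun h' => ∫ lam in Iic (0:ℝ), max (lam - h') 0 * f lam)
        (∫ lam in Iic (0:ℝ), (if h₀ < lam then (-1:ℝ) else 0) * f lam) h₀ := by
      intro h₀
      have hae : ∀ᵐ lam ∂(volume.restrict (Iic (0:ℝ))), lam ≠ h₀ := by
        refine ae_restrict_of_ae ?_
        rw [ae_iff]
        convert Real.volume_singleton (a := h₀) using 2
        ext lam; simp
      have hlip : ∀ᵐ lam ∂(volume.restrict (Iic (0:ℝ))), LipschitzOnWith (Real.nnabs (f lam))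
          (fun h' => max (lam - h') 0 * f lam) (Metric.ball h₀ 1) := by
        refine Filter.Eventually.of_forall fun lam => ?_
        apply LipschitzOnWith.of_dist_le_mul
        intro a _ b _
        rw [Real.dist_eq, Real.dist_eq, ← sub_mul, abs_mul]
        have h1 : |max (lam - a) 0 - max (lam - b) 0| ≤ |a - b| := by
          calc |max (lam - a) 0 - max (lam - b) 0| ≤ |lam - a - (lam - b)| :=
                abs_max_sub_max_le_abs _ _ _
            _ = |b - a| := by ring_nf
            _ = |a - b| := abs_sub_comm _ _
        calc |max (lam - a) 0 - max (lam - b) 0| * |f lam| ≤ |a - b| * |f lam| :=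
              mul_le_mul_of_nonneg_right h1 (abs_nonneg _)
          _ = ↑(Real.nnabs (f lam)) * |a - b| := by
              rw [mul_comm]; simp [Real.coe_nnabs]
      have hdiff : ∀ᵐ lam ∂(volume.restrict (Iic (0:ℝ))),
          HasDerivAt (fun h' => max (lam - h') 0 * f lam)
            ((if h₀ < lam then (-1:ℝ) else 0) * f lam) h₀ := by
        filter_upwards [hae] with lam hlam
        exact (hasDerivAt_maxsub' hlam).mul_const (f lam)
      have hFpmeas : AEStronglyMeasurable (fun lam => (if h₀ < lam then (-1:ℝ) else 0) * f lam)
          (volume.restrict (Iic (0:ℝ))) :=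
        ((Measurable.ite measurableSet_Ioi measurable_const measurable_const).mul
          hf_meas).aestronglyMeasurable.restrict
      have main := hasDerivAt_integral_of_dominated_loc_of_lip
        (F := fun h' lam => max (lam - h') 0 * f lam)
        (F' := fun lam => (if h₀ < lam then (-1:ℝ) else 0) * f lam)
        (bound := f) (Metric.ball_mem_nhds h₀ one_pos)
        (Filter.Eventually.of_forall fun h' => hLmeas h') (hLint h₀) hFpmeas hlip
        hf_int.restrict hdiff
      exact main.2
    have hL_deriv_val : ∀ h₀ : ℝ, h₀ ≤ 0 →
        ∫ lam in Iic (0:ℝ), (if h₀ < lam then (-1:ℝ) else 0) * f lam = F h₀ - τ := by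
      intro h₀ hh₀
      have hind : (fun lam => (if h₀ < lam then (-1:ℝ) else 0) * f lam)
          = fun lam => -((Ioi h₀).indicator f lam) := by
        ext lam; by_cases hl : h₀ < lam <;> simp [Set.indicator_apply, hl, mem_Ioi]
      rw [hind, integral_neg, setIntegral_indicator measurableSet_Ioi,
        inter_comm, Ioi_inter_Iic]
      have h4 := intervalIntegral.integral_Iic_sub_Iic (f := f) (μ := volume) (a := h₀)
        (b := (0:ℝ)) hf_int.integrableOn hf_int.integrableOn
      rw [intervalIntegral.integral_of_le hh₀] at h4
      rw [← hF, ← hF] at h4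
      rw [← hquantile]
      linarith [h4]
    set L : ℝ → ℝ := fun h' => ∫ lam in Iic (0:ℝ), max (lam - h') 0 * f lam with hLdef
    have hL0 : L 0 = 0 := by
      rw [hLdef]
      simp only
      rw [setIntegral_congr_fun measurableSet_Iic
        (g := fun _ => (0:ℝ)) fun lam hlam => by
          rw [max_eq_right (by linarith [mem_Iic.mp hlam] : lam - 0 ≤ 0), zero_mul]]
      simp
    have hDzero : ∀ x ∈ Ico h 0, HasDerivWithinAt (fun y => G y - L y) 0 (Ici x) x := by
      intro x hx
      have hd := (hG_deriv x).sub (hL_deriv x)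
      rw [hL_deriv_val x hx.2.le] at hd
      rw [sub_self] at hd; exact hd.hasDerivWithinAt
    have hDcont : ContinuousOn (fun y => G y - L y) (Icc h 0) := fun x _ =>
      (((hG_deriv x).sub (hL_deriv x)).differentiableAt.continuousAt).continuousWithinAt
    have hconst := constant_of_has_deriv_right_zero hDcont hDzero 0 (right_mem_Icc.mpr hh)
    simp only [hG0, hL0, sub_zero] at hconst
    have hGL : G h = L h := by linarith [hconst]
    rw [hGL, intervalIntegral.integral_of_le hh, hLdef]
    simp only
    rw [← Iic_union_Ioc_eq_Iic hh,
      setIntegral_union (Iic_disjoint_Ioc le_rfl) measurableSet_Ioc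
        (IntegrableOn.mono_set (hLint h) (Iic_subset_Iic.mpr hh))
        (IntegrableOn.mono_set (hLint h) Ioc_subset_Iic_self)]
    rw [setIntegral_congr_fun measurableSet_Iic
      (g := fun _ => (0:ℝ)) (fun lam hlam => by
        rw [max_eq_right (by linarith [mem_Iic.mp hlam] : lam - h ≤ 0), zero_mul])]
    rw [setIntegral_congr_fun measurableSet_Ioc
      (g := fun lam => (lam - h) * f lam) (fun lam hlam => by
        rw [max_eq_left (by linarith [hlam.1] : (0:ℝ) ≤ lam - h)])]
    simp
  intro h
  refine ⟨part1 h, ?_, part3 h, part4 h⟩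
  have h2 := part2 h
  rw [← part1 h] at h2
  exact h2
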